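/- Let M be a hypermodular rank-4 matroid containing a line l₁ and a plane (hyperplane) e₁ with l₁ ∩ e₁ = ∅. Then M contains two disjoint coplanar lines; more precisely, for any point p ∈ e₁, the set l₂ = cl(l₁ ∪ p) ∩ e₁ is a line disjoint from and coplanar with l₁. -/

import Mathlib

open Set

namespace StickyKantor

variable {α : Type*}

/-- The rank of a set in a matroid, as an integer (junk value `0` when infinite). -/
noncomputable def rk (M : Matroid α) (X : Set α) : ℤ :=
  ((⨆ I ∈ {I : Set α | M.Indep I ∧ I ⊆ X}, I.encard).toNat : ℤ)

/-- The modular defect of a pair of sets. -/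
noncomputable def mdefect (M : Matroid α) (X Y : Set α) : ℤ :=
  rk M X + rk M Y - rk M (X ∪ Y) - rk M (X ∩ Y)

/-- A modular pair of sets. -/
def ModularPair (M : Matroid α) (X Y : Set α) : Prop :=
  rk M X + rk M Y = rk M (X ∪ Y) + rk M (X ∩ Y)

/-- `M'` is an extension of `M`: it has a larger ground set and restricts to `M`. -/
def IsExtension (M' M : Matroid α) : Prop :=
  M.E ⊆ M'.E ∧ M = M'.restrict M.E

/-- A point: a rank-1 flat. -/
def IsPoint (M : Matroid α) (p : Set α) : Prop := M.IsFlat p ∧ rk M p = 1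

/-- A line: a rank-2 flat. -/
def IsLine (M : Matroid α) (l : Set α) : Prop := M.IsFlat l ∧ rk M l = 2

/-- A plane: a rank-3 flat. -/
def IsPlane (M : Matroid α) (e : Set α) : Prop := M.IsFlat e ∧ rk M e = 3

/-- Two lines are coplanar if their join has rank at most 3. -/
def Coplanar (M : Matroid α) (l₁ l₂ : Set α) : Prop := rk M (l₁ ∪ l₂) ≤ 3

/-- A hyperplane: a maximal proper flat. -/
def IsHyperplane (M : Matroid α) (H : Set α) : Prop :=
  M.IsFlat H ∧ H ≠ M.E ∧ ∀ F, M.IsFlat F → H ⊂ F → F = M.E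

/-- A matroid is hypermodular if every pair of hyperplanes is a modular pair. -/
def Hypermodular (M : Matroid α) : Prop :=
  ∀ H₁ H₂, IsHyperplane M H₁ → IsHyperplane M H₂ → ModularPair M H₁ H₂

/-- A matroid is modular if every pair of flats is a modular pair. -/
def Modular (M : Matroid α) : Prop :=
  ∀ F₁ F₂, M.IsFlat F₁ → M.IsFlat F₂ → ModularPair M F₁ F₂

/-- A modular cut: an up-closed family of flats closed under intersections of
modular pairs. -/
def IsModularCut (M : Matroid α) (𝓜 : Set (Set α)) : Prop :=
  (∀ F ∈ 𝓜, M.IsFlat F) ∧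
  (∀ F ∈ 𝓜, ∀ F', M.IsFlat F' → F ⊆ F' → F' ∈ 𝓜) ∧
  (∀ F₁ ∈ 𝓜, ∀ F₂ ∈ 𝓜, ModularPair M F₁ F₂ → F₁ ∩ F₂ ∈ 𝓜)

/-- The principal modular cut of a flat `F`. -/
def principalCut (M : Matroid α) (F : Set α) : Set (Set α) :=
  {G | M.IsFlat G ∧ F ⊆ G}

/-- The modular cut generated by a family of flats. -/
def genCut (M : Matroid α) (A : Set (Set α)) : Set (Set α) :=
  ⋂₀ {𝓜 | IsModularCut M 𝓜 ∧ A ⊆ 𝓜}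

/-- A non-modular pair of flats is intersectable if the modular cut it generates is
not the principal modular cut of its intersection. -/
def Intersectable (M : Matroid α) (X Y : Set α) : Prop :=
  genCut M {X, Y} ≠ principalCut M (X ∩ Y)

/-- A matroid is OTE (only trivially extendable) if every nonempty modular cut
is principal. -/
def OTE (M : Matroid α) : Prop :=
  ∀ 𝓜, IsModularCut M 𝓜 → 𝓜 ≠ ∅ → ∃ F, M.IsFlat F ∧ 𝓜 = principalCut M F

/-- A matroid is sticky if every pair of extensions meeting exactly in its ground set
has an amalgam. -/
def Sticky (M : Matroid α) : Prop :=
  ∀ N₁ N₂ : Matroid α, IsExtension N₁ M → IsExtension N₂ M → N₁.E ∩ N₂.E = M.E →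
    ∃ A : Matroid α, A.E = N₁.E ∪ N₂.E ∧ IsExtension A N₁ ∧ IsExtension A N₂

/-- The function `η` of the amalgam construction. -/
noncomputable def eta (M M₁ M₂ : Matroid α) (X : Set α) : ℤ :=
  rk M₁ (X ∩ M₁.E) + rk M₂ (X ∩ M₂.E) - rk M (X ∩ M.E)

/-- The function `ξ` of the amalgam construction. -/
noncomputable def xi (M M₁ M₂ : Matroid α) (X : Set α) : ℤ :=
  sInf {n : ℤ | ∃ Y, X ⊆ Y ∧ Y ⊆ M₁.E ∪ M₂.E ∧ n = eta M M₁ M₂ Y}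

/-- The lattice `𝓛(M₁,M₂)` of sets whose traces on both ground sets are flats. -/
def latticeL (M₁ M₂ : Matroid α) : Set (Set α) :=
  {X | X ⊆ M₁.E ∪ M₂.E ∧ M₁.IsFlat (X ∩ M₁.E) ∧ M₂.IsFlat (X ∩ M₂.E)}

section Aux
variable {M : Matroid α} {I J X Y F F' : Set α}

lemma flat_closure (M : Matroid α) (X : Set α) : M.IsFlat (M.closure X) := by
  rw [Matroid.closure_def]
  have hne : Nonempty {F // M.IsFlat F ∧ X ∩ M.E ⊆ F} :=
    ⟨⟨M.E, M.ground_isFlat, inter_subset_right⟩⟩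
  have : M.IsFlat (⋂ F : {F // M.IsFlat F ∧ X ∩ M.E ⊆ F}, F.1) :=
    Matroid.IsFlat.iInter (fun F => F.2.1)
  rw [sInter_eq_iInter]
  exact this

lemma Flat.inter' (h1 : M.IsFlat F) (h2 : M.IsFlat F') : M.IsFlat (F ∩ F') := by
  have hsub : F ∩ F' ⊆ M.E := inter_subset_left.trans h1.subset_ground
  have : M.closure (F ∩ F') = F ∩ F' := by
    apply subset_antisymm
    · exact subset_inter
        ((M.closure_subset_closure inter_subset_left).trans_eq h1.closure)
        ((M.closure_subset_closure inter_subset_right).trans_eq h2.closure)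
    · exact M.subset_closure _ hsub
  exact this ▸ flat_closure M (F ∩ F')

lemma rk_eq (hI : M.IsBasis' I X) : rk M X = (I.encard.toNat : ℤ) := by
  have hsup : (⨆ I ∈ {I : Set α | M.Indep I ∧ I ⊆ X}, I.encard) = I.encard := by
    apply le_antisymm
    · refine iSup₂_le ?_
      rintro J ⟨hJi, hJX⟩
      obtain ⟨K, hK, hJK⟩ := hJi.subset_isBasis'_of_subset hJX
      exact (encard_le_encard hJK).trans (hK.encard_eq_encard hI).le
    · exact le_iSup₂_of_le I ⟨hI.indep, hI.subset⟩ le_rfl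
  rw [rk, hsup]

lemma rk_mono [M.RankFinite] (h : X ⊆ Y) : rk M X ≤ rk M Y := by
  obtain ⟨I, hI⟩ := M.exists_isBasis' X
  obtain ⟨J, hJ, hIJ⟩ := hI.indep.subset_isBasis'_of_subset (hI.subset.trans h)
  rw [rk_eq hI, rk_eq hJ]
  have := ENat.toNat_le_toNat (encard_le_encard hIJ) hJ.indep.finite.encard_lt_top.ne
  exact_mod_cast this

lemma rk_closure (M : Matroid α) (X : Set α) : rk M (M.closure X) = rk M X := by
  obtain ⟨I, hI⟩ := M.exists_isBasis' X
  rw [rk_eq hI, rk_eq hI.isBasis_closure_right.isBasis']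

lemma rk_lt_of_flat_ssubset [M.RankFinite] (hF : M.IsFlat F) (hF' : M.IsFlat F')
    (h : F ⊂ F') : rk M F < rk M F' := by
  obtain ⟨I, hI⟩ := M.exists_isBasis F hF.subset_ground
  obtain ⟨J, hJ, hIJ⟩ := hI.indep.subset_isBasis_of_subset (hI.subset.trans h.subset)
    hF'.subset_ground
  rw [rk_eq hI.isBasis', rk_eq hJ.isBasis']
  have hIJne : I ≠ J := by
    rintro rfl
    have hsub := hJ.subset_closure
    rw [hI.closure_eq_closure, hF.closure] at hsub
    exact h.not_subset hsub
  have hlt : I.encard < J.encard :=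
    hI.indep.finite.encard_lt_encard (ssubset_of_ne_of_subset hIJne hIJ)
  have hle := ENat.toNat_le_toNat hlt.le hJ.indep.finite.encard_lt_top.ne
  have hne2 : I.encard.toNat ≠ J.encard.toNat := fun hEq => hlt.ne (by
    rw [← ENat.coe_toNat hI.indep.finite.encard_lt_top.ne,
      ← ENat.coe_toNat hJ.indep.finite.encard_lt_top.ne, hEq])
  exact_mod_cast lt_of_le_of_ne hle hne2


lemma rk_union_singleton [M.RankFinite] {p : α} (hX : X ⊆ M.E) (hp : p ∈ M.E)
    (hpX : p ∉ M.closure X) : rk M (X ∪ {p}) = rk M X + 1 := by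
  obtain ⟨I, hI⟩ := M.exists_isBasis X hX
  have hpI : p ∉ I := fun h => hpX (M.subset_closure X hX (hI.subset h))
  have hind : M.Indep (insert p I) := by
    rw [hI.indep.insert_indep_iff]
    exact Or.inl ⟨hp, by rwa [hI.closure_eq_closure]⟩
  have hB := hI.insert_isBasis_insert hind
  rw [union_singleton, rk_eq hB.isBasis', rk_eq hI.isBasis',
    encard_insert_of_notMem hpI]
  have hfin := hI.indep.finite.encard_lt_top.ne
  lift I.encard to ℕ using hfin with n hn
  norm_num
  rfl

lemma flat_eq_of_subset_of_rk [M.RankFinite] (hF : M.IsFlat F) (hF' : M.IsFlat F')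
    (hsub : F ⊆ F') (hrk : rk M F' ≤ rk M F) : F = F' := by
  by_contra hne
  exact absurd hrk (not_le.mpr (rk_lt_of_flat_ssubset hF hF'
    (ssubset_of_ne_of_subset hne hsub)))

lemma rk_empty (M : Matroid α) : rk M (∅ : Set α) = 0 := by
  obtain ⟨I, hI⟩ := M.exists_isBasis' (∅ : Set α)
  have : I = ∅ := subset_empty_iff.mp hI.subset
  rw [rk_eq hI, this]
  simp


lemma isHyperplane_of_rk3 [M.RankFinite] (hrank : rk M M.E = 4) (hF : M.IsFlat F)
    (h3 : rk M F = 3) : IsHyperplane M F := by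
  refine ⟨hF, fun h => by rw [h, hrank] at h3; norm_num at h3, fun F' hF' hss => ?_⟩
  have h1 := rk_lt_of_flat_ssubset hF hF' hss
  have h2 := rk_mono (M := M) hF'.subset_ground
  rw [hrank] at h2
  exact (flat_eq_of_subset_of_rk hF' M.ground_isFlat hF'.subset_ground
    (by omega)).symm ▸ rfl

end Aux

/-- a hypermodular rank-4 matroid with a disjoint line-plane pair
contains two disjoint coplanar lines. -/
theorem hypermodular_disjoint_coplanar_lines (M : Matroid α) [M.RankFinite]
    (hhm : Hypermodular M) (hrank : rk M M.E = 4)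
    (l₁ e₁ : Set α) (hl : IsLine M l₁) (he : IsPlane M e₁)
    (hdisj : l₁ ∩ e₁ = ∅) (p : α) (hp : p ∈ e₁) :
    IsLine M (M.closure (l₁ ∪ {p}) ∩ e₁) ∧
      l₁ ∩ (M.closure (l₁ ∪ {p}) ∩ e₁) = ∅ ∧
      Coplanar M l₁ (M.closure (l₁ ∪ {p}) ∩ e₁) := by
  obtain ⟨hlf, hl2⟩ := hl
  obtain ⟨hef, he3⟩ := he
  have hpE : p ∈ M.E := hef.subset_ground hp
  have hpl : p ∉ M.closure l₁ := by
    rw [hlf.closure]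
    exact fun h => (hdisj ▸ mem_inter h hp : p ∈ (∅ : Set α))
  set P := M.closure (l₁ ∪ {p}) with hP
  have hPf : M.IsFlat P := flat_closure M _
  have hlP : l₁ ⊆ P :=
    subset_union_left.trans (M.subset_closure _
      (union_subset hlf.subset_ground (singleton_subset_iff.mpr hpE)))
  have hP3 : rk M P = 3 := by
    rw [hP, rk_closure, rk_union_singleton hlf.subset_ground hpE hpl, hl2]
    norm_num
  have hlne : l₁.Nonempty := by
    rw [nonempty_iff_ne_empty]
    rintro rfl
    rw [rk_empty] at hl2
    norm_num at hl2
  have hPne : P ≠ e₁ := by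
    obtain ⟨x, hx⟩ := hlne
    intro h
    exact (hdisj ▸ mem_inter hx (h ▸ hlP hx) : x ∈ (∅ : Set α))
  have hPhyp : IsHyperplane M P := isHyperplane_of_rk3 hrank hPf hP3
  have hehyp : IsHyperplane M e₁ := isHyperplane_of_rk3 hrank hef he3
  -- rk (P ∪ e₁) = 4
  have hF4 : rk M (P ∪ e₁) = 4 := by
    set F := M.closure (P ∪ e₁) with hFdef
    have hFf : M.IsFlat F := flat_closure M _
    have hPF : P ⊆ F := subset_union_left.trans
      (M.subset_closure _ (union_subset hPf.subset_ground hef.subset_ground))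
    have heF : e₁ ⊆ F := subset_union_right.trans
      (M.subset_closure _ (union_subset hPf.subset_ground hef.subset_ground))
    have hPFne : P ≠ F := by
      intro hEq
      rw [← hEq] at heF
      exact hPne (flat_eq_of_subset_of_rk hef hPf heF (by rw [hP3, he3])).symm
    have hFE : F = M.E := hPhyp.2.2 F hFf (ssubset_of_ne_of_subset hPFne hPF)
    rw [← rk_closure M (P ∪ e₁), ← hFdef, hFE, hrank]
  have hmp := hhm P e₁ hPhyp hehyp
  rw [ModularPair, hP3, he3, hF4] at hmp
  have hline2 : rk M (P ∩ e₁) = 2 := by omega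
  refine ⟨⟨Flat.inter' hPf hef, hline2⟩, ?_, ?_⟩
  · rw [← subset_empty_iff, ← hdisj]
    exact fun x hx => ⟨hx.1, hx.2.2⟩
  · rw [Coplanar]
    have hsub : l₁ ∪ (P ∩ e₁) ⊆ P := union_subset hlP inter_subset_left
    calc rk M (l₁ ∪ (P ∩ e₁)) ≤ rk M P := rk_mono hsub
    _ = 3 := hP3
end StickyKantor
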